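/- For every fixed edge e of Q_n^d, the number of pure paths (over all pairs x,y at Hamming distance 3d and all valid choices of t,u) that contain e is O(3^{3d}·C(n,d)^4). -/

import Mathlib

open Finset

def xorv {n : ℕ} (a b : Fin n → Bool) : Fin n → Bool := fun i => xor (a i) (b i)

def supp {n : ℕ} (x : Fin n → Bool) : Finset (Fin n) :=
  Finset.univ.filter (fun i => x i = true)

def suppList {n : ℕ} (x y : Fin n → Bool) : List (Fin n) :=
  Finset.sort (supp (xorv x y)) (· ≤ ·)

def fOne {n : ℕ} (d : ℕ) (x y : Fin n → Bool) : Fin n → Bool :=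
  fun i => decide (i ∈ (suppList x y).take d)

def fTwo {n : ℕ} (d : ℕ) (x y : Fin n → Bool) : Fin n → Bool :=
  fun i => decide (i ∈ ((suppList x y).drop d).take d)

def pureList {n : ℕ} (d : ℕ) (x y t u : Fin n → Bool) : List (Fin n → Bool) :=
  [x,
   xorv x t,
   xorv (xorv x t) u,
   xorv (xorv (xorv x t) u) (fOne d x y),
   xorv (xorv (xorv (xorv x t) u) (fOne d x y)) (fTwo d x y),
   xorv (xorv y t) u,
   xorv y u,
   y]

/-- The list of edges (as unordered pairs) of a list of vertices. -/
def edgesOfList {α : Type*} (l : List α) : List (Sym2 α) :=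
  List.zipWith (fun a b => s(a, b)) l l.tail

/-- `(x, y, t, u)` determines a pure path: `dist_H(x,y) = 3d`, `t` and `u` have weight `d`,
and the supports of `t`, `u`, `x ⊕ y` are pairwise disjoint. -/
def IsPureQuad {n : ℕ} (d : ℕ) (q : (Fin n → Bool) × (Fin n → Bool) × (Fin n → Bool) × (Fin n → Bool)) : Prop :=
  hammingDist q.1 q.2.1 = 3 * d ∧ (supp q.2.2.1).card = d ∧ (supp q.2.2.2).card = d ∧
    supp q.2.2.1 ∩ supp q.2.2.2 = ∅ ∧
    supp q.2.2.1 ∩ supp (xorv q.1 q.2.1) = ∅ ∧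
    supp q.2.2.2 ∩ supp (xorv q.1 q.2.1) = ∅

instance {n d : ℕ} (q : (Fin n → Bool) × (Fin n → Bool) × (Fin n → Bool) × (Fin n → Bool)) :
    Decidable (IsPureQuad d q) := by unfold IsPureQuad; infer_instance

namespace S9

variable {n : ℕ}

lemma mem_supp {x : Fin n → Bool} {i : Fin n} : i ∈ supp x ↔ x i = true := by
  simp [supp]

lemma supp_inj {a b : Fin n → Bool} (h : supp a = supp b) : a = b := by
  funext i
  have h' : a i = true ↔ b i = true := by rw [← mem_supp, ← mem_supp, h]
  cases hA : a i <;> cases hB : b i <;> simp_all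

lemma xorv_cancel (a b : Fin n → Bool) : xorv (xorv a b) b = a := by
  funext i; simp [xorv]

lemma xorv_cancel2 (a b : Fin n → Bool) : xorv (xorv a b) a = b := by
  funext i; simp [xorv]; cases a i <;> cases b i <;> rfl

lemma xorv_lcancel (a b : Fin n → Bool) : xorv a (xorv a b) = b := by
  funext i; simp [xorv]

lemma xorv_right_cancel {a b c : Fin n → Bool} (h : xorv a c = xorv b c) : a = b := by
  have := congrArg (fun v => xorv v c) h
  simpa [xorv_cancel] using this

lemma xorv_left_cancel {a b c : Fin n → Bool} (h : xorv c a = xorv c b) : a = b := by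
  have := congrArg (fun v => xorv c v) h
  simpa [xorv_lcancel] using this

lemma xorv_v4v5 (x y t u f1 f2 : Fin n → Bool) :
    xorv (xorv (xorv (xorv (xorv x t) u) f1) f2) (xorv (xorv y t) u)
      = xorv (xorv (xorv x y) f1) f2 := by
  funext i
  simp only [xorv]
  cases x i <;> cases y i <;> cases t i <;> cases u i <;> cases f1 i <;> cases f2 i <;> rfl

lemma card_supp_xorv (x y : Fin n → Bool) : (supp (xorv x y)).card = hammingDist x y := by
  rw [hammingDist]
  congr 1
  ext i
  simp only [supp, mem_filter, mem_univ, true_and, xorv]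
  cases hx : x i <;> cases hy : y i <;> simp_all

/-- canonical first block, as a function of `w = x ⊕ y` alone -/
def F1 (d : ℕ) (w : Fin n → Bool) : Fin n → Bool :=
  fun i => decide (i ∈ (Finset.sort (supp w) (· ≤ ·)).take d)

def F2 (d : ℕ) (w : Fin n → Bool) : Fin n → Bool :=
  fun i => decide (i ∈ ((Finset.sort (supp w) (· ≤ ·)).drop d).take d)

lemma fOne_eq (d : ℕ) (x y : Fin n → Bool) : fOne d x y = F1 d (xorv x y) := rfl
lemma fTwo_eq (d : ℕ) (x y : Fin n → Bool) : fTwo d x y = F2 d (xorv x y) := rfl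

lemma mem_supp_F1 {d : ℕ} {w : Fin n → Bool} {i : Fin n} :
    i ∈ supp (F1 d w) ↔ i ∈ (Finset.sort (supp w) (· ≤ ·)).take d := by
  simp [mem_supp, F1]

lemma mem_supp_F2 {d : ℕ} {w : Fin n → Bool} {i : Fin n} :
    i ∈ supp (F2 d w) ↔ i ∈ ((Finset.sort (supp w) (· ≤ ·)).drop d).take d := by
  simp [mem_supp, F2]

lemma supp_F1_subset (d : ℕ) (w : Fin n → Bool) : supp (F1 d w) ⊆ supp w := by
  intro i hi
  rw [mem_supp_F1] at hi
  exact (Finset.mem_sort ..).1 (List.mem_of_mem_take hi)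

lemma supp_F2_subset (d : ℕ) (w : Fin n → Bool) : supp (F2 d w) ⊆ supp w := by
  intro i hi
  rw [mem_supp_F2] at hi
  exact (Finset.mem_sort ..).1 (List.mem_of_mem_drop (List.mem_of_mem_take hi))

lemma disjoint_F1_F2 (d : ℕ) (w : Fin n → Bool) : Disjoint (supp (F1 d w)) (supp (F2 d w)) := by
  rw [Finset.disjoint_left]
  intro i h1 h2
  rw [mem_supp_F1] at h1
  rw [mem_supp_F2] at h2
  exact List.disjoint_take_drop (Finset.sort_nodup ..) (le_refl d) h1
    (List.mem_of_mem_take h2)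

lemma card_supp_F1 {d : ℕ} {w : Fin n → Bool} (hw : (supp w).card = 3 * d) :
    (supp (F1 d w)).card = d := by
  have hnd : ((Finset.sort (supp w) (· ≤ ·)).take d).Nodup :=
    (List.take_sublist _ _).nodup (Finset.sort_nodup ..)
  have : supp (F1 d w) = ((Finset.sort (supp w) (· ≤ ·)).take d).toFinset := by
    ext i; rw [mem_supp_F1, List.mem_toFinset]
  rw [this, List.toFinset_card_of_nodup hnd, List.length_take, Finset.length_sort, hw]
  omega

lemma card_supp_F2 {d : ℕ} {w : Fin n → Bool} (hw : (supp w).card = 3 * d) :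
    (supp (F2 d w)).card = d := by
  have hnd : (((Finset.sort (supp w) (· ≤ ·)).drop d).take d).Nodup :=
    ((List.take_sublist _ _).trans (List.drop_sublist _ _)).nodup (Finset.sort_nodup ..)
  have : supp (F2 d w) = (((Finset.sort (supp w) (· ≤ ·)).drop d).take d).toFinset := by
    ext i; rw [mem_supp_F2, List.mem_toFinset]
  rw [this, List.toFinset_card_of_nodup hnd, List.length_take, List.length_drop,
    Finset.length_sort, hw]
  omega

lemma supp_F3 (d : ℕ) (w : Fin n → Bool) :
    supp (xorv (xorv w (F1 d w)) (F2 d w)) = supp w \ (supp (F1 d w) ∪ supp (F2 d w)) := by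
  ext i
  have h1 : F1 d w i = true → w i = true := fun h => mem_supp.1 (supp_F1_subset d w (mem_supp.2 h))
  have h2 : F2 d w i = true → w i = true := fun h => mem_supp.1 (supp_F2_subset d w (mem_supp.2 h))
  have h12 : F1 d w i = true → F2 d w i = true → False := fun ha hb =>
    (Finset.disjoint_left.1 (disjoint_F1_F2 d w)) (mem_supp.2 ha) (mem_supp.2 hb)
  simp only [mem_supp, Finset.mem_sdiff, Finset.mem_union, xorv]
  cases hw : w i <;> cases hA : F1 d w i <;> cases hB : F2 d w i <;> simp_all

lemma sym2_resolve {α : Type*} [DecidableEq α] {a b c d c' d' : α}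
    (h : s(a, b) = s(c, d)) (h' : s(a, b) = s(c', d'))
    (hb : (decide (c = a)) = (decide (c' = a))) : c = c' ∧ d = d' := by
  rw [Sym2.eq_iff] at h h'
  rw [decide_eq_decide] at hb
  rcases h with ⟨h1, h2⟩ | ⟨h1, h2⟩ <;> rcases h' with ⟨h3, h4⟩ | ⟨h3, h4⟩ <;>
    constructor <;> simp_all

lemma choose_add_le (n a b : ℕ) : n.choose (a + b) ≤ n.choose a * n.choose b := by
  rcases le_or_gt (a + b) n with h | h
  · have key := Nat.choose_mul (n := n) (k := a + b) (s := a) (Nat.le_add_right a b)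
    have h1 : 1 ≤ (a + b).choose a := Nat.choose_pos (Nat.le_add_right a b)
    calc n.choose (a + b) ≤ n.choose (a + b) * (a + b).choose a :=
          Nat.le_mul_of_pos_right _ h1
      _ = n.choose a * (n - a).choose (a + b - a) := key
      _ ≤ n.choose a * n.choose b := by
          rw [Nat.add_sub_cancel_left]
          exact Nat.mul_le_mul_left _ (Nat.choose_le_choose b (Nat.sub_le n a))
  · rw [Nat.choose_eq_zero_of_lt h]
    exact Nat.zero_le _

lemma choose_two_le (n d : ℕ) : n.choose (2 * d) ≤ n.choose d * n.choose d := by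
  have h : 2 * d = d + d := by ring
  rw [h]; exact choose_add_le n d d

lemma choose_three_le (n d : ℕ) : n.choose (3 * d) ≤ n.choose d * n.choose d * n.choose d := by
  have h : 3 * d = d + (d + d) := by ring
  rw [h]
  calc n.choose (d + (d + d)) ≤ n.choose d * n.choose (d + d) := choose_add_le n d (d + d)
    _ ≤ n.choose d * (n.choose d * n.choose d) :=
        Nat.mul_le_mul_left _ (choose_add_le n d d)
    _ = n.choose d * n.choose d * n.choose d := by ring

abbrev Qn (n : ℕ) := (Fin n → Bool) × (Fin n → Bool) × (Fin n → Bool) × (Fin n → Bool)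

lemma pure_card_w {d : ℕ} {q : Qn n} (h : IsPureQuad d q) :
    (supp (xorv q.1 q.2.1)).card = 3 * d := by rw [card_supp_xorv]; exact h.1

end S9

namespace S9

variable {n : ℕ}

lemma cardB0 (d : ℕ) (a b : Fin n → Bool) :
    (univ.filter (fun q : Qn n => IsPureQuad d q ∧
        s(a, b) = s(q.1, xorv q.1 q.2.2.1))).card
      ≤ 2 * (n.choose d * n.choose (3 * d)) := by
  classical
  have hT : ((univ : Finset Bool) ×ˢ powersetCard d (univ : Finset (Fin n)) ×ˢ
      powersetCard (3 * d) (univ : Finset (Fin n))).card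
      = 2 * (n.choose d * n.choose (3 * d)) := by
    simp [Finset.card_powersetCard]
  rw [← hT]
  apply Finset.card_le_card_of_injOn
    (fun q => (decide (q.1 = a), supp q.2.2.2, supp (xorv q.1 q.2.1)))
  · rintro ⟨x, y, t, u⟩ hq
    simp only [Finset.mem_coe, mem_filter, mem_univ, true_and] at hq
    obtain ⟨hp, he⟩ := hq
    simp only [Finset.mem_coe, Finset.mem_product, Finset.mem_univ, Finset.mem_powersetCard_univ, true_and]
    exact ⟨hp.2.2.1, pure_card_w hp⟩
  · rintro ⟨x, y, t, u⟩ hq ⟨x', y', t', u'⟩ hq' him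
    simp only [Finset.mem_coe, mem_filter, mem_univ, true_and] at hq hq'
    obtain ⟨hp, he⟩ := hq
    obtain ⟨hp', he'⟩ := hq'
    simp only [Prod.mk.injEq] at him
    obtain ⟨hbool, hus, hws⟩ := him
    have hu : u = u' := supp_inj hus
    obtain ⟨hv0, hv1⟩ := sym2_resolve he he' hbool
    have hww : xorv x y = xorv x' y' := supp_inj hws
    have ht : t = t' := by
      rw [hv0] at hv1
      exact xorv_left_cancel hv1
    have hy : y = y' := by
      have e1 : y = xorv x (xorv x y) := (xorv_lcancel _ _).symm
      rw [e1, hww, hv0, xorv_lcancel]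
    simp [hv0, hy, ht, hu]

lemma cardB1 (d : ℕ) (a b : Fin n → Bool) :
    (univ.filter (fun q : Qn n => IsPureQuad d q ∧
        s(a, b) = s(xorv q.1 q.2.2.1, xorv (xorv q.1 q.2.2.1) q.2.2.2))).card
      ≤ 2 * (n.choose d * n.choose (3 * d)) := by
  classical
  have hT : ((univ : Finset Bool) ×ˢ powersetCard d (univ : Finset (Fin n)) ×ˢ
      powersetCard (3 * d) (univ : Finset (Fin n))).card
      = 2 * (n.choose d * n.choose (3 * d)) := by
    simp [Finset.card_powersetCard]
  rw [← hT]
  apply Finset.card_le_card_of_injOn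
    (fun q => (decide (xorv q.1 q.2.2.1 = a), supp q.2.2.1, supp (xorv q.1 q.2.1)))
  · rintro ⟨x, y, t, u⟩ hq
    simp only [Finset.mem_coe, mem_filter, mem_univ, true_and] at hq
    obtain ⟨hp, he⟩ := hq
    simp only [Finset.mem_coe, Finset.mem_product, Finset.mem_univ, Finset.mem_powersetCard_univ, true_and]
    exact ⟨hp.2.1, pure_card_w hp⟩
  · rintro ⟨x, y, t, u⟩ hq ⟨x', y', t', u'⟩ hq' him
    simp only [Finset.mem_coe, mem_filter, mem_univ, true_and] at hq hq'
    obtain ⟨hp, he⟩ := hq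
    obtain ⟨hp', he'⟩ := hq'
    simp only [Prod.mk.injEq] at him
    obtain ⟨hbool, hts, hws⟩ := him
    have ht : t = t' := supp_inj hts
    obtain ⟨hv1, hv2⟩ := sym2_resolve he he' hbool
    have hww : xorv x y = xorv x' y' := supp_inj hws
    have hx : x = x' := by
      rw [ht] at hv1
      exact xorv_right_cancel hv1
    have hu : u = u' := by
      rw [← hv1] at hv2
      exact xorv_left_cancel hv2
    have hy : y = y' := by
      have e1 : y = xorv x (xorv x y) := (xorv_lcancel _ _).symm
      rw [e1, hww, hx, xorv_lcancel]
    simp [hx, hy, ht, hu]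

lemma cardB2 (d : ℕ) (a b : Fin n → Bool) :
    (univ.filter (fun q : Qn n => IsPureQuad d q ∧
        s(a, b) = s(xorv (xorv q.1 q.2.2.1) q.2.2.2,
                   xorv (xorv (xorv q.1 q.2.2.1) q.2.2.2) (fOne d q.1 q.2.1)))).card
      ≤ 2 * (n.choose d * (n.choose d * n.choose (2 * d))) := by
  classical
  have hT : ((univ : Finset Bool) ×ˢ powersetCard d (univ : Finset (Fin n)) ×ˢ
      powersetCard d (univ : Finset (Fin n)) ×ˢ powersetCard (2 * d) (univ : Finset (Fin n))).card
      = 2 * (n.choose d * (n.choose d * n.choose (2 * d))) := by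
    simp [Finset.card_powersetCard]
  rw [← hT]
  apply Finset.card_le_card_of_injOn
    (fun q => (decide (xorv (xorv q.1 q.2.2.1) q.2.2.2 = a),
       supp q.2.2.1, supp q.2.2.2, supp (xorv q.1 q.2.1) \ supp (fOne d q.1 q.2.1)))
  · rintro ⟨x, y, t, u⟩ hq
    simp only [Finset.mem_coe, mem_filter, mem_univ, true_and] at hq
    obtain ⟨hp, he⟩ := hq
    have hw : (supp (xorv x y)).card = 3 * d := pure_card_w hp
    simp only [Finset.mem_coe, Finset.mem_product, Finset.mem_univ, Finset.mem_powersetCard_univ, true_and]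
    refine ⟨hp.2.1, hp.2.2.1, ?_⟩
    rw [fOne_eq, Finset.card_sdiff_of_subset (supp_F1_subset d _), hw, card_supp_F1 hw]
    omega
  · rintro ⟨x, y, t, u⟩ hq ⟨x', y', t', u'⟩ hq' him
    simp only [Finset.mem_coe, mem_filter, mem_univ, true_and] at hq hq'
    obtain ⟨hp, he⟩ := hq
    obtain ⟨hp', he'⟩ := hq'
    simp only [Prod.mk.injEq] at him
    obtain ⟨hbool, hts, hus, hS⟩ := him
    have ht : t = t' := supp_inj hts
    have hu : u = u' := supp_inj hus
    obtain ⟨hv2, hv3⟩ := sym2_resolve he he' hbool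
    have hx : x = x' := by
      rw [ht, hu] at hv2
      exact xorv_right_cancel (xorv_right_cancel hv2)
    have hf1 : fOne d x y = fOne d x' y' := by
      have e1 : fOne d x y
          = xorv (xorv (xorv (xorv x t) u) (fOne d x y)) (xorv (xorv x t) u) :=
        (xorv_cancel2 _ _).symm
      rw [e1, hv3, hv2]
      exact xorv_cancel2 _ _
    have hww : xorv x y = xorv x' y' := by
      apply supp_inj
      have h1 : supp (xorv x y)
          = (supp (xorv x y) \ supp (fOne d x y)) ∪ supp (fOne d x y) :=
        (Finset.sdiff_union_of_subset (by rw [fOne_eq]; exact supp_F1_subset d _)).symm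
      have h2 : supp (xorv x' y')
          = (supp (xorv x' y') \ supp (fOne d x' y')) ∪ supp (fOne d x' y') :=
        (Finset.sdiff_union_of_subset (by rw [fOne_eq]; exact supp_F1_subset d _)).symm
      rw [h1, h2, hS, hf1]
    have hy : y = y' := by
      have e1 : y = xorv x (xorv x y) := (xorv_lcancel _ _).symm
      rw [e1, hww, hx, xorv_lcancel]
    simp [hx, hy, ht, hu]

lemma cardB3 (d : ℕ) (a b : Fin n → Bool) :
    (univ.filter (fun q : Qn n => IsPureQuad d q ∧
        s(a, b) = s(xorv (xorv (xorv q.1 q.2.2.1) q.2.2.2) (fOne d q.1 q.2.1),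
                   xorv (xorv (xorv (xorv q.1 q.2.2.1) q.2.2.2) (fOne d q.1 q.2.1))
                     (fTwo d q.1 q.2.1)))).card
      ≤ 2 * (n.choose d * (n.choose d * n.choose (2 * d))) := by
  classical
  have hT : ((univ : Finset Bool) ×ˢ powersetCard d (univ : Finset (Fin n)) ×ˢ
      powersetCard d (univ : Finset (Fin n)) ×ˢ powersetCard (2 * d) (univ : Finset (Fin n))).card
      = 2 * (n.choose d * (n.choose d * n.choose (2 * d))) := by
    simp [Finset.card_powersetCard]
  rw [← hT]
  apply Finset.card_le_card_of_injOn
    (fun q => (decide (xorv (xorv (xorv q.1 q.2.2.1) q.2.2.2) (fOne d q.1 q.2.1) = a),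
       supp q.2.2.1, supp q.2.2.2, supp (xorv q.1 q.2.1) \ supp (fTwo d q.1 q.2.1)))
  · rintro ⟨x, y, t, u⟩ hq
    simp only [Finset.mem_coe, mem_filter, mem_univ, true_and] at hq
    obtain ⟨hp, he⟩ := hq
    have hw : (supp (xorv x y)).card = 3 * d := pure_card_w hp
    simp only [Finset.mem_coe, Finset.mem_product, Finset.mem_univ, Finset.mem_powersetCard_univ, true_and]
    refine ⟨hp.2.1, hp.2.2.1, ?_⟩
    rw [fTwo_eq, Finset.card_sdiff_of_subset (supp_F2_subset d _), hw, card_supp_F2 hw]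
    omega
  · rintro ⟨x, y, t, u⟩ hq ⟨x', y', t', u'⟩ hq' him
    simp only [Finset.mem_coe, mem_filter, mem_univ, true_and] at hq hq'
    obtain ⟨hp, he⟩ := hq
    obtain ⟨hp', he'⟩ := hq'
    simp only [Prod.mk.injEq] at him
    obtain ⟨hbool, hts, hus, hS⟩ := him
    have ht : t = t' := supp_inj hts
    have hu : u = u' := supp_inj hus
    obtain ⟨hv3, hv4⟩ := sym2_resolve he he' hbool
    have hf2 : fTwo d x y = fTwo d x' y' := by
      have e1 : fTwo d x y
          = xorv (xorv (xorv (xorv (xorv x t) u) (fOne d x y)) (fTwo d x y))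
              (xorv (xorv (xorv x t) u) (fOne d x y)) :=
        (xorv_cancel2 _ _).symm
      rw [e1, hv4, hv3]
      exact xorv_cancel2 _ _
    have hww : xorv x y = xorv x' y' := by
      apply supp_inj
      have h1 : supp (xorv x y)
          = (supp (xorv x y) \ supp (fTwo d x y)) ∪ supp (fTwo d x y) :=
        (Finset.sdiff_union_of_subset (by rw [fTwo_eq]; exact supp_F2_subset d _)).symm
      have h2 : supp (xorv x' y')
          = (supp (xorv x' y') \ supp (fTwo d x' y')) ∪ supp (fTwo d x' y') :=
        (Finset.sdiff_union_of_subset (by rw [fTwo_eq]; exact supp_F2_subset d _)).symm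
      rw [h1, h2, hS, hf2]
    have hf1 : fOne d x y = fOne d x' y' := by
      rw [fOne_eq, fOne_eq, hww]
    have hx : x = x' := by
      rw [ht, hu, hf1] at hv3
      exact xorv_right_cancel (xorv_right_cancel (xorv_right_cancel hv3))
    have hy : y = y' := by
      have e1 : y = xorv x (xorv x y) := (xorv_lcancel _ _).symm
      rw [e1, hww, hx, xorv_lcancel]
    simp [hx, hy, ht, hu]

lemma cardB4 (d : ℕ) (a b : Fin n → Bool) :
    (univ.filter (fun q : Qn n => IsPureQuad d q ∧
        s(a, b) = s(xorv (xorv (xorv (xorv q.1 q.2.2.1) q.2.2.2) (fOne d q.1 q.2.1))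
                     (fTwo d q.1 q.2.1),
                   xorv (xorv q.2.1 q.2.2.1) q.2.2.2))).card
      ≤ 2 * (n.choose d * (n.choose d * n.choose (2 * d))) := by
  classical
  have hT : ((univ : Finset Bool) ×ˢ powersetCard d (univ : Finset (Fin n)) ×ˢ
      powersetCard d (univ : Finset (Fin n)) ×ˢ powersetCard (2 * d) (univ : Finset (Fin n))).card
      = 2 * (n.choose d * (n.choose d * n.choose (2 * d))) := by
    simp [Finset.card_powersetCard]
  rw [← hT]
  apply Finset.card_le_card_of_injOn
    (fun q => (decide (xorv (xorv (xorv (xorv q.1 q.2.2.1) q.2.2.2) (fOne d q.1 q.2.1))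
        (fTwo d q.1 q.2.1) = a),
       supp q.2.2.1, supp q.2.2.2, supp (fOne d q.1 q.2.1) ∪ supp (fTwo d q.1 q.2.1)))
  · rintro ⟨x, y, t, u⟩ hq
    simp only [Finset.mem_coe, mem_filter, mem_univ, true_and] at hq
    obtain ⟨hp, he⟩ := hq
    have hw : (supp (xorv x y)).card = 3 * d := pure_card_w hp
    simp only [Finset.mem_coe, Finset.mem_product, Finset.mem_univ, Finset.mem_powersetCard_univ, true_and]
    refine ⟨hp.2.1, hp.2.2.1, ?_⟩
    rw [fOne_eq, fTwo_eq, Finset.card_union_of_disjoint (disjoint_F1_F2 _ _),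
      card_supp_F1 hw, card_supp_F2 hw]
    omega
  · rintro ⟨x, y, t, u⟩ hq ⟨x', y', t', u'⟩ hq' him
    simp only [Finset.mem_coe, mem_filter, mem_univ, true_and] at hq hq'
    obtain ⟨hp, he⟩ := hq
    obtain ⟨hp', he'⟩ := hq'
    simp only [Prod.mk.injEq] at him
    obtain ⟨hbool, hts, hus, hS⟩ := him
    have ht : t = t' := supp_inj hts
    have hu : u = u' := supp_inj hus
    obtain ⟨hv4, hv5⟩ := sym2_resolve he he' hbool
    have hf3 : xorv (xorv (xorv x y) (fOne d x y)) (fTwo d x y)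
        = xorv (xorv (xorv x' y') (fOne d x' y')) (fTwo d x' y') := by
      rw [← xorv_v4v5 x y t u (fOne d x y) (fTwo d x y),
        ← xorv_v4v5 x' y' t' u' (fOne d x' y') (fTwo d x' y'), hv4, hv5]
    have hww : xorv x y = xorv x' y' := by
      apply supp_inj
      have h1 : supp (xorv x y)
          = (supp (fOne d x y) ∪ supp (fTwo d x y))
            ∪ supp (xorv (xorv (xorv x y) (fOne d x y)) (fTwo d x y)) := by
        rw [fOne_eq, fTwo_eq, supp_F3]
        exact (Finset.union_sdiff_of_subset
          (Finset.union_subset (supp_F1_subset _ _) (supp_F2_subset _ _))).symm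
      have h2 : supp (xorv x' y')
          = (supp (fOne d x' y') ∪ supp (fTwo d x' y'))
            ∪ supp (xorv (xorv (xorv x' y') (fOne d x' y')) (fTwo d x' y')) := by
        rw [fOne_eq, fTwo_eq, supp_F3]
        exact (Finset.union_sdiff_of_subset
          (Finset.union_subset (supp_F1_subset _ _) (supp_F2_subset _ _))).symm
      rw [h1, h2, hS, hf3]
    have hf1 : fOne d x y = fOne d x' y' := by rw [fOne_eq, fOne_eq, hww]
    have hf2 : fTwo d x y = fTwo d x' y' := by rw [fTwo_eq, fTwo_eq, hww]
    have hx : x = x' := by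
      rw [ht, hu, hf1, hf2] at hv4
      exact xorv_right_cancel (xorv_right_cancel (xorv_right_cancel (xorv_right_cancel hv4)))
    have hy : y = y' := by
      have e1 : y = xorv x (xorv x y) := (xorv_lcancel _ _).symm
      rw [e1, hww, hx, xorv_lcancel]
    simp [hx, hy, ht, hu]

lemma cardB5 (d : ℕ) (a b : Fin n → Bool) :
    (univ.filter (fun q : Qn n => IsPureQuad d q ∧
        s(a, b) = s(xorv (xorv q.2.1 q.2.2.1) q.2.2.2, xorv q.2.1 q.2.2.2))).card
      ≤ 2 * (n.choose d * n.choose (3 * d)) := by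
  classical
  have hT : ((univ : Finset Bool) ×ˢ powersetCard d (univ : Finset (Fin n)) ×ˢ
      powersetCard (3 * d) (univ : Finset (Fin n))).card
      = 2 * (n.choose d * n.choose (3 * d)) := by
    simp [Finset.card_powersetCard]
  rw [← hT]
  apply Finset.card_le_card_of_injOn
    (fun q => (decide (xorv (xorv q.2.1 q.2.2.1) q.2.2.2 = a), supp q.2.2.2,
      supp (xorv q.1 q.2.1)))
  · rintro ⟨x, y, t, u⟩ hq
    simp only [Finset.mem_coe, mem_filter, mem_univ, true_and] at hq
    obtain ⟨hp, he⟩ := hq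
    simp only [Finset.mem_coe, Finset.mem_product, Finset.mem_univ, Finset.mem_powersetCard_univ, true_and]
    exact ⟨hp.2.2.1, pure_card_w hp⟩
  · rintro ⟨x, y, t, u⟩ hq ⟨x', y', t', u'⟩ hq' him
    simp only [Finset.mem_coe, mem_filter, mem_univ, true_and] at hq hq'
    obtain ⟨hp, he⟩ := hq
    obtain ⟨hp', he'⟩ := hq'
    simp only [Prod.mk.injEq] at him
    obtain ⟨hbool, hus, hws⟩ := him
    have hu : u = u' := supp_inj hus
    obtain ⟨hv5, hv6⟩ := sym2_resolve he he' hbool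
    have hww : xorv x y = xorv x' y' := supp_inj hws
    have hy : y = y' := by
      rw [hu] at hv6
      exact xorv_right_cancel hv6
    have hx : x = x' := by
      have e1 : x = xorv (xorv x y) y := (xorv_cancel _ _).symm
      rw [e1, hww, hy, xorv_cancel]
    have ht : t = t' := by
      rw [hu, hy] at hv5
      exact xorv_left_cancel (xorv_right_cancel hv5)
    simp [hx, hy, ht, hu]

lemma cardB6 (d : ℕ) (a b : Fin n → Bool) :
    (univ.filter (fun q : Qn n => IsPureQuad d q ∧
        s(a, b) = s(xorv q.2.1 q.2.2.2, q.2.1))).card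
      ≤ 2 * (n.choose d * n.choose (3 * d)) := by
  classical
  have hT : ((univ : Finset Bool) ×ˢ powersetCard d (univ : Finset (Fin n)) ×ˢ
      powersetCard (3 * d) (univ : Finset (Fin n))).card
      = 2 * (n.choose d * n.choose (3 * d)) := by
    simp [Finset.card_powersetCard]
  rw [← hT]
  apply Finset.card_le_card_of_injOn
    (fun q => (decide (xorv q.2.1 q.2.2.2 = a), supp q.2.2.1, supp (xorv q.1 q.2.1)))
  · rintro ⟨x, y, t, u⟩ hq
    simp only [Finset.mem_coe, mem_filter, mem_univ, true_and] at hq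
    obtain ⟨hp, he⟩ := hq
    simp only [Finset.mem_coe, Finset.mem_product, Finset.mem_univ, Finset.mem_powersetCard_univ, true_and]
    exact ⟨hp.2.1, pure_card_w hp⟩
  · rintro ⟨x, y, t, u⟩ hq ⟨x', y', t', u'⟩ hq' him
    simp only [Finset.mem_coe, mem_filter, mem_univ, true_and] at hq hq'
    obtain ⟨hp, he⟩ := hq
    obtain ⟨hp', he'⟩ := hq'
    simp only [Prod.mk.injEq] at him
    obtain ⟨hbool, hts, hws⟩ := him
    have ht : t = t' := supp_inj hts
    obtain ⟨hv6, hv7⟩ := sym2_resolve he he' hbool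
    have hww : xorv x y = xorv x' y' := supp_inj hws
    have hu : u = u' := by
      rw [← hv7] at hv6
      exact xorv_left_cancel hv6
    have hx : x = x' := by
      have e1 : x = xorv (xorv x y) y := (xorv_cancel _ _).symm
      rw [e1, hww, hv7, xorv_cancel]
    simp [hx, hv7, ht, hu]

end S9
open S9 in
/-- Lemma 3.2: every fixed edge `e` of `Q_n^d` is contained in `O(3^{3d} · C(n,d)⁴)`
pure paths (counted as quadruples `(x,y,t,u)` giving rise to a pure path through `e`). -/
theorem stmt_9 :
    ∃ K : ℝ, 0 < K ∧ ∀ (n d : ℕ), 1 ≤ d → ∀ e : Sym2 (Fin n → Bool),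
      ((Finset.univ.filter (fun q : (Fin n → Bool) × (Fin n → Bool) × (Fin n → Bool) × (Fin n → Bool) =>
          IsPureQuad d q ∧ e ∈ edgesOfList (pureList d q.1 q.2.1 q.2.2.1 q.2.2.2))).card : ℝ)
        ≤ K * 3 ^ (3 * d) * (n.choose d) ^ 4 := by
  classical
  refine ⟨14, by norm_num, ?_⟩
  intro n d hd e
  induction e using Sym2.ind with
  | _ a b =>
  set C := n.choose d with hC
  set B0 := univ.filter (fun q : Qn n => IsPureQuad d q ∧
      s(a, b) = s(q.1, xorv q.1 q.2.2.1)) with hB0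
  set B1 := univ.filter (fun q : Qn n => IsPureQuad d q ∧
      s(a, b) = s(xorv q.1 q.2.2.1, xorv (xorv q.1 q.2.2.1) q.2.2.2)) with hB1
  set B2 := univ.filter (fun q : Qn n => IsPureQuad d q ∧
      s(a, b) = s(xorv (xorv q.1 q.2.2.1) q.2.2.2,
        xorv (xorv (xorv q.1 q.2.2.1) q.2.2.2) (fOne d q.1 q.2.1))) with hB2
  set B3 := univ.filter (fun q : Qn n => IsPureQuad d q ∧
      s(a, b) = s(xorv (xorv (xorv q.1 q.2.2.1) q.2.2.2) (fOne d q.1 q.2.1),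
        xorv (xorv (xorv (xorv q.1 q.2.2.1) q.2.2.2) (fOne d q.1 q.2.1))
          (fTwo d q.1 q.2.1))) with hB3
  set B4 := univ.filter (fun q : Qn n => IsPureQuad d q ∧
      s(a, b) = s(xorv (xorv (xorv (xorv q.1 q.2.2.1) q.2.2.2) (fOne d q.1 q.2.1))
          (fTwo d q.1 q.2.1),
        xorv (xorv q.2.1 q.2.2.1) q.2.2.2)) with hB4
  set B5 := univ.filter (fun q : Qn n => IsPureQuad d q ∧
      s(a, b) = s(xorv (xorv q.2.1 q.2.2.1) q.2.2.2, xorv q.2.1 q.2.2.2)) with hB5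
  set B6 := univ.filter (fun q : Qn n => IsPureQuad d q ∧
      s(a, b) = s(xorv q.2.1 q.2.2.2, q.2.1)) with hB6
  have hsub : (Finset.univ.filter (fun q : Qn n =>
      IsPureQuad d q ∧ s(a, b) ∈ edgesOfList (pureList d q.1 q.2.1 q.2.2.1 q.2.2.2)))
      ⊆ B0 ∪ B1 ∪ B2 ∪ B3 ∪ B4 ∪ B5 ∪ B6 := by
    rintro ⟨x, y, t, u⟩ hq
    simp only [mem_filter, mem_univ, true_and] at hq
    obtain ⟨hp, hm⟩ := hq
    simp only [edgesOfList, pureList, List.tail_cons, List.zipWith_cons_cons,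
      List.zipWith_nil_right, List.mem_cons, List.not_mem_nil, or_false] at hm
    simp only [hB0, hB1, hB2, hB3, hB4, hB5, hB6, Finset.mem_union, mem_filter, mem_univ,
      true_and]
    tauto
  have hchain : (B0 ∪ B1 ∪ B2 ∪ B3 ∪ B4 ∪ B5 ∪ B6).card
      ≤ B0.card + B1.card + B2.card + B3.card + B4.card + B5.card + B6.card := by
    calc (B0 ∪ B1 ∪ B2 ∪ B3 ∪ B4 ∪ B5 ∪ B6).card
        ≤ (B0 ∪ B1 ∪ B2 ∪ B3 ∪ B4 ∪ B5).card + B6.card := Finset.card_union_le _ _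
      _ ≤ ((B0 ∪ B1 ∪ B2 ∪ B3 ∪ B4).card + B5.card) + B6.card :=
          Nat.add_le_add_right (Finset.card_union_le _ _) _
      _ ≤ (((B0 ∪ B1 ∪ B2 ∪ B3).card + B4.card) + B5.card) + B6.card :=
          Nat.add_le_add_right (Nat.add_le_add_right (Finset.card_union_le _ _) _) _
      _ ≤ ((((B0 ∪ B1 ∪ B2).card + B3.card) + B4.card) + B5.card) + B6.card := by
          exact Nat.add_le_add_right (Nat.add_le_add_right
            (Nat.add_le_add_right (Finset.card_union_le _ _) _) _) _
      _ ≤ (((((B0 ∪ B1).card + B2.card) + B3.card) + B4.card) + B5.card) + B6.card := by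
          exact Nat.add_le_add_right (Nat.add_le_add_right (Nat.add_le_add_right
            (Nat.add_le_add_right (Finset.card_union_le _ _) _) _) _) _
      _ ≤ B0.card + B1.card + B2.card + B3.card + B4.card + B5.card + B6.card := by
          exact Nat.add_le_add_right (Nat.add_le_add_right (Nat.add_le_add_right
            (Nat.add_le_add_right (Nat.add_le_add_right (Finset.card_union_le _ _) _) _) _) _) _
  have h3 : n.choose (3 * d) ≤ C * C * C := choose_three_le n d
  have h2 : n.choose (2 * d) ≤ C * C := choose_two_le n d
  have hA : 2 * (C * n.choose (3 * d)) ≤ 2 * C ^ 4 := by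
    calc 2 * (C * n.choose (3 * d)) ≤ 2 * (C * (C * C * C)) := by gcongr
      _ = 2 * C ^ 4 := by ring
  have hBb : 2 * (C * (C * n.choose (2 * d))) ≤ 2 * C ^ 4 := by
    calc 2 * (C * (C * n.choose (2 * d))) ≤ 2 * (C * (C * (C * C))) := by gcongr
      _ = 2 * C ^ 4 := by ring
  have key : (Finset.univ.filter (fun q : Qn n =>
      IsPureQuad d q ∧ s(a, b) ∈ edgesOfList (pureList d q.1 q.2.1 q.2.2.1 q.2.2.2))).card
      ≤ 14 * C ^ 4 := by
    have hb0 := (cardB0 d a b).trans hA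
    have hb1 := (cardB1 d a b).trans hA
    have hb2 := (cardB2 d a b).trans hBb
    have hb3 := (cardB3 d a b).trans hBb
    have hb4 := (cardB4 d a b).trans hBb
    have hb5 := (cardB5 d a b).trans hA
    have hb6 := (cardB6 d a b).trans hA
    rw [← hB0] at hb0
    rw [← hB1] at hb1
    rw [← hB2] at hb2
    rw [← hB3] at hb3
    rw [← hB4] at hb4
    rw [← hB5] at hb5
    rw [← hB6] at hb6
    have := (Finset.card_le_card hsub).trans hchain
    omega
  have hcast : ((Finset.univ.filter (fun q : Qn n =>
      IsPureQuad d q ∧ s(a, b) ∈ edgesOfList (pureList d q.1 q.2.1 q.2.2.1 q.2.2.2))).card : ℝ)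
      ≤ 14 * (C : ℝ) ^ 4 := by exact_mod_cast key
  have h1 : (1 : ℝ) ≤ 3 ^ (3 * d) := one_le_pow₀ (by norm_num)
  have h0 : (0 : ℝ) ≤ (C : ℝ) ^ 4 := by positivity
  calc ((Finset.univ.filter (fun q : Qn n =>
      IsPureQuad d q ∧ s(a, b) ∈ edgesOfList (pureList d q.1 q.2.1 q.2.2.1 q.2.2.2))).card : ℝ)
      ≤ 14 * (C : ℝ) ^ 4 := hcast
    _ = 14 * 1 * (C : ℝ) ^ 4 := by ring
    _ ≤ 14 * 3 ^ (3 * d) * (C : ℝ) ^ 4 := by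
        apply mul_le_mul_of_nonneg_right _ h0
        nlinarith
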